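/- Let C be the Clifford algebra of a nondegenerate quadratic form on an n-dimensional space with n even. Then the set of invertible elements T such that T·C^n·T^{-1} ⊆ C^n (where C^n is the one-dimensional subspace of grade n) equals the union of the invertible even elements and the invertible odd elements. -/

import Mathlib

open CliffordAlgebra

noncomputable section

variable {n : ℕ} (Q : QuadraticForm ℝ (Fin n → ℝ))

/-- The standard generators `e_a` of the Clifford algebra. -/
def egen (a : Fin n) : CliffordAlgebra Q := ι Q (Pi.single a 1)

/-- The ordered product of generators indexed by a finite set. -/
def eProd (s : Finset (Fin n)) : CliffordAlgebra Q :=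
  ((s.sort (· ≤ ·)).map (egen Q)).prod

/-- The grade-`k` subspace `C^k`, spanned by the products of `k` distinct generators. -/
def gradeSubmodule (k : ℕ) : Submodule ℝ (CliffordAlgebra Q) :=
  Submodule.span ℝ {x | ∃ s : Finset (Fin n), s.card = k ∧ x = eProd Q s}

/-- The set `Z^× (C^{×(0)} ∪ C^{×(1)})` : invertible central elements times
invertible even or odd elements. -/
def Pset : Set (CliffordAlgebra Q) :=
  {T | ∃ W T₀ : CliffordAlgebra Q,
    W ∈ Subalgebra.center ℝ (CliffordAlgebra Q) ∧ IsUnit W ∧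
    (T₀ ∈ evenOdd Q 0 ∨ T₀ ∈ evenOdd Q 1) ∧ IsUnit T₀ ∧ T = W * T₀}

/-- `Q` is diagonal with entries `±1` in the standard basis (an orthonormal-type basis,
expressing nondegeneracy of `Q`). -/
def DiagQ : Prop :=
  (∀ a, Q (Pi.single a 1) = 1 ∨ Q (Pi.single a 1) = -1) ∧
  (∀ a b : Fin n, a ≠ b → QuadraticMap.polar Q (Pi.single a 1) (Pi.single b 1) = 0)

/-- List product of generators. -/
def lProd (l : List (Fin n)) : CliffordAlgebra Q := (l.map (egen Q)).prod

lemma lProd_nil : lProd Q [] = 1 := rfl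

lemma lProd_cons (a : Fin n) (l : List (Fin n)) :
    lProd Q (a :: l) = egen Q a * lProd Q l := by
  simp [lProd]

lemma lProd_append (l₁ l₂ : List (Fin n)) :
    lProd Q (l₁ ++ l₂) = lProd Q l₁ * lProd Q l₂ := by
  simp [lProd]

lemma egen_sq (a : Fin n) :
    egen Q a * egen Q a = algebraMap ℝ _ (Q (Pi.single a 1)) := ι_sq_scalar Q _

lemma egen_anticomm (hQ : DiagQ Q) {a b : Fin n} (h : a ≠ b) :
    egen Q a * egen Q b = -(egen Q b * egen Q a) := by
  have := ι_mul_ι_add_swap (Q := Q) (Pi.single a 1) (Pi.single b 1)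
  rw [hQ.2 a b h] at this
  simp only [map_zero] at this
  exact eq_neg_of_add_eq_zero_left this

lemma egen_mul_lProd (hQ : DiagQ Q) (a : Fin n) (l : List (Fin n)) :
    egen Q a * lProd Q l = ((-1 : ℝ) ^ (l.filter (· ≠ a)).length) • (lProd Q l * egen Q a) := by
  induction l with
  | nil => simp [lProd_nil]
  | cons b l ih =>
    rw [lProd_cons]
    by_cases hab : b = a
    · subst hab
      have : (List.filter (· ≠ b) (b :: l)).length = (l.filter (· ≠ b)).length := by
        simp [List.filter_cons]
      rw [this]
      conv_lhs => rw [ih]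
      rw [mul_smul_comm, ← mul_assoc]
    · have hfil : (List.filter (· ≠ a) (b :: l)).length = (l.filter (· ≠ a)).length + 1 := by
        simp [List.filter_cons, hab]
      rw [hfil, ← mul_assoc, egen_anticomm Q hQ (fun h => hab h.symm), neg_mul,
        mul_assoc, ih, mul_smul_comm, ← mul_assoc, pow_succ, mul_neg_one, neg_smul]

/-- The top element: product of all generators. -/
lemma lProd_mul_reverse (hQ : DiagQ Q) (l : List (Fin n)) :
    lProd Q l * lProd Q l.reverse =
      algebraMap ℝ _ ((l.map fun a => Q (Pi.single a 1)).prod) := by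
  induction l with
  | nil => simp [lProd_nil]
  | cons a l ih =>
    rw [List.reverse_cons, lProd_cons, lProd_append]
    have h1 : lProd Q [a] = egen Q a := by simp [lProd]
    rw [h1, mul_assoc, ← mul_assoc (lProd Q l), ih, Algebra.commutes, ← mul_assoc, egen_sq,
      ← map_mul, List.map_cons, List.prod_cons]

lemma lProd_prod_ne_zero (hQ : DiagQ Q) (l : List (Fin n)) :
    (l.map fun a => Q (Pi.single a 1)).prod ≠ 0 := by
  apply List.prod_ne_zero
  intro h0
  simp only [List.mem_map] at h0
  obtain ⟨a, -, ha⟩ := h0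
  rcases hQ.1 a with h | h <;> rw [h] at ha <;> norm_num at ha

lemma isUnit_lProd (hQ : DiagQ Q) (l : List (Fin n)) : IsUnit (lProd Q l) := by
  have h1 := lProd_mul_reverse Q hQ l
  have h2 := lProd_mul_reverse Q hQ l.reverse
  rw [List.reverse_reverse] at h2
  have hε : (l.map fun a => Q (Pi.single a 1)).prod ≠ 0 := lProd_prod_ne_zero Q hQ l
  have hε' : (l.reverse.map fun a => Q (Pi.single a 1)).prod =
      (l.map fun a => Q (Pi.single a 1)).prod := by
    rw [List.map_reverse, List.prod_reverse]
  rw [hε'] at h2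
  set ε := (l.map fun a => Q (Pi.single a 1)).prod
  refine ⟨⟨lProd Q l, ε⁻¹ • lProd Q l.reverse, ?_, ?_⟩, rfl⟩
  · rw [mul_smul_comm, h1, Algebra.algebraMap_eq_smul_one, smul_smul, inv_mul_cancel₀ hε,
      one_smul]
  · rw [smul_mul_assoc, h2, Algebra.algebraMap_eq_smul_one, smul_smul, inv_mul_cancel₀ hε,
      one_smul]

/-- notation for the top element -/
def topE : CliffordAlgebra Q := eProd Q Finset.univ

lemma sort_univ_length : ((Finset.univ : Finset (Fin n)).sort (· ≤ ·)).length = n := by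
  rw [Finset.length_sort, Finset.card_univ, Fintype.card_fin]

lemma topE_comm_egen (hQ : DiagQ Q) (hn : Even n) (a : Fin n) :
    topE Q * egen Q a = -(egen Q a * topE Q) := by
  have h := egen_mul_lProd Q hQ a ((Finset.univ : Finset (Fin n)).sort (· ≤ ·))
  set l := ((Finset.univ : Finset (Fin n)).sort (· ≤ ·)) with hl
  have hnodup : l.Nodup := Finset.sort_nodup _ _
  have hmem : a ∈ l := by rw [hl, Finset.mem_sort]; exact Finset.mem_univ a
  have hlen : (l.filter (· ≠ a)).length = n - 1 := by
    have h1 : l.count a = 1 := List.count_eq_one_of_mem hnodup hmem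
    have h3 := List.length_eq_countP_add_countP (· == a) (l := l)
    rw [List.count] at h1
    rw [← List.countP_eq_length_filter]
    have h4 : List.countP (fun x => decide (x ≠ a)) l = List.countP (fun x => !(x == a)) l := by
      apply List.countP_congr; intro x _; simp
    have h5 : List.countP (fun x => !(x == a)) l = List.countP (fun x => ¬(x == a)) l := by
      apply List.countP_congr; intro x _; simp
    have h6 : l.length = n := sort_univ_length
    omega
  have hpos : 0 < n := Fin.pos a
  have hodd : Odd (n - 1) := by
    rcases hn with ⟨k, hk⟩
    refine ⟨k - 1, by omega⟩
  rw [hlen, hodd.neg_one_pow] at h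
  have htop : topE Q = lProd Q l := rfl
  rw [htop, h]
  simp

lemma topE_mul (hQ : DiagQ Q) (hn : Even n) (x : CliffordAlgebra Q) :
    topE Q * x = involute x * topE Q := by
  induction x using CliffordAlgebra.induction with
  | algebraMap r => rw [AlgHom.commutes]; exact (Algebra.commutes r _).symm
  | ι m =>
    rw [involute_ι, neg_mul]
    have hm : ∑ a : Fin n, m a • (Pi.single a 1 : Fin n → ℝ) = m := by
      funext j
      rw [Finset.sum_apply]
      simp [Pi.single_apply]
    have : ι Q m = ∑ a : Fin n, m a • egen Q a := by
      conv_lhs => rw [← hm]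
      rw [map_sum]
      simp [egen]
    rw [this, Finset.mul_sum, Finset.sum_mul, ← Finset.sum_neg_distrib]
    refine Finset.sum_congr rfl fun a _ => ?_
    rw [mul_smul_comm, smul_mul_assoc, topE_comm_egen Q hQ hn a, smul_neg]
  | mul x y hx hy =>
    rw [← mul_assoc, hx, mul_assoc, hy, ← mul_assoc, map_mul]
  | add x y hx hy =>
    rw [mul_add, hx, hy, map_add, add_mul]

lemma isUnit_topE (hQ : DiagQ Q) : IsUnit (topE Q) := isUnit_lProd Q hQ _

lemma topE_mem : topE Q ∈ gradeSubmodule Q n :=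
  Submodule.subset_span ⟨Finset.univ, by rw [Finset.card_univ, Fintype.card_fin], rfl⟩

lemma gradeSubmodule_top_eq : gradeSubmodule Q n = Submodule.span ℝ {topE Q} := by
  unfold gradeSubmodule
  congr 1
  ext x
  constructor
  · rintro ⟨s, hs, rfl⟩
    have : s = Finset.univ := Finset.eq_univ_of_card s (by rw [hs, Fintype.card_fin])
    rw [this]; rfl
  · rintro rfl
    exact ⟨Finset.univ, by rw [Finset.card_univ, Fintype.card_fin], rfl⟩

lemma decompose_eq (x : CliffordAlgebra Q) :
    x = ↑(DirectSum.decompose (evenOdd Q) x 0) + ↑(DirectSum.decompose (evenOdd Q) x 1) := by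
  classical
  conv_lhs => rw [← DirectSum.sum_support_decompose (evenOdd Q) x]
  rw [Finset.sum_subset (Finset.subset_univ _) (by
    intro i _ hi
    rw [DFinsupp.notMem_support_iff.mp hi]; rfl)]
  show ∑ i : Fin 2, (fun j => ((DirectSum.decompose (evenOdd Q) x j : CliffordAlgebra Q))) i = _
  rw [Fin.sum_univ_two]
  rfl

/-- For `n` even, `Γ^n = C^{×(0)} ∪ C^{×(1)}`. -/
theorem stmt0 (hQ : DiagQ Q) (hn : Even n) (T : (CliffordAlgebra Q)ˣ) :
    (∀ U ∈ gradeSubmodule Q n,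
        (↑T : CliffordAlgebra Q) * U * (↑T⁻¹ : CliffordAlgebra Q) ∈ gradeSubmodule Q n) ↔
      ((↑T : CliffordAlgebra Q) ∈ evenOdd Q 0 ∨ (↑T : CliffordAlgebra Q) ∈ evenOdd Q 1) := by
  set ω := topE Q with hω
  constructor
  · intro h
    have hmem := h ω (topE_mem Q)
    rw [gradeSubmodule_top_eq Q, Submodule.mem_span_singleton] at hmem
    obtain ⟨c, hc⟩ := hmem
    -- T * ω = c • (ω * T)
    have hTω : (↑T : CliffordAlgebra Q) * ω = c • (ω * ↑T) := by
      have := congrArg (· * (↑T : CliffordAlgebra Q)) hc.symm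
      simp only [smul_mul_assoc] at this
      calc (↑T : CliffordAlgebra Q) * ω
          = ↑T * ω * (↑T⁻¹ * ↑T) := by rw [Units.inv_mul, mul_one]
        _ = (↑T * ω * ↑T⁻¹) * ↑T := by rw [← mul_assoc]
        _ = c • (ω * ↑T) := by rw [← this]
    rw [topE_mul Q hQ hn] at hTω
    -- cancel ω
    obtain ⟨u, hu⟩ := isUnit_topE Q hQ
    have hT : (↑T : CliffordAlgebra Q) = c • involute (↑T : CliffordAlgebra Q) := by
      have h9 : ω * (↑u⁻¹ : CliffordAlgebra Q) = 1 := by rw [hω, ← hu, Units.mul_inv]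
      have := congrArg (· * (↑u⁻¹ : CliffordAlgebra Q)) hTω
      simp only [smul_mul_assoc] at this
      simp only [← hω] at this
      rw [mul_assoc, mul_assoc, h9, mul_one, mul_one] at this
      exact this
    have hc2 : c * c = 1 := by
      have h2 : involute (↑T : CliffordAlgebra Q) = c • (↑T : CliffordAlgebra Q) := by
        conv_lhs => rw [hT]
        rw [map_smul, involute_involute]
      rw [h2, smul_smul] at hT
      by_contra hcc
      have : ((1 : ℝ) - c * c) • (↑T : CliffordAlgebra Q) = 0 := by
        rw [sub_smul, one_smul, ← hT, sub_self]
      rcases smul_eq_zero.mp this with h' | h'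
      · exact hcc (by linarith [sub_eq_zero.mp (by linarith : (1:ℝ) - c*c = 0)])
      · exact T.ne_zero h'
    set S₀ : CliffordAlgebra Q := ↑(DirectSum.decompose (evenOdd Q) (↑T) 0) with hS₀
    set S₁ : CliffordAlgebra Q := ↑(DirectSum.decompose (evenOdd Q) (↑T) 1) with hS₁
    have hsum : (↑T : CliffordAlgebra Q) = S₀ + S₁ := decompose_eq Q _
    have h₀ : S₀ ∈ evenOdd Q 0 := (DirectSum.decompose (evenOdd Q) (↑T : CliffordAlgebra Q) 0).2
    have h₁ : S₁ ∈ evenOdd Q 1 := (DirectSum.decompose (evenOdd Q) (↑T : CliffordAlgebra Q) 1).2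
    have hinv : involute (↑T : CliffordAlgebra Q) = S₀ - S₁ := by
      rw [hsum, map_add, involute_eq_of_mem_even h₀, involute_eq_of_mem_odd h₁, sub_eq_add_neg]
    rcases mul_self_eq_one_iff.mp hc2 with hc1 | hc1
    · subst hc1
      rw [one_smul, hinv] at hT
      have heq : S₀ + S₁ = S₀ - S₁ := hsum.symm.trans hT
      have h9 : (2 : ℝ) • S₁ = (S₀ + S₁) - (S₀ - S₁) := by module
      rw [heq, sub_self] at h9
      have hz : S₁ = 0 := by
        rcases smul_eq_zero.mp h9 with h' | h'
        · norm_num at h'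
        · exact h'
      left
      rw [hsum, hz, add_zero]; exact h₀
    · subst hc1
      rw [hinv] at hT
      have heq : S₀ + S₁ = S₁ - S₀ := by
        rw [neg_smul, one_smul, neg_sub] at hT
        exact hsum.symm.trans hT
      have h9 : (2 : ℝ) • S₀ = (S₀ + S₁) - (S₁ - S₀) := by module
      rw [heq, sub_self] at h9
      have hz : S₀ = 0 := by
        rcases smul_eq_zero.mp h9 with h' | h'
        · norm_num at h'
        · exact h'
      right
      rw [hsum, hz, zero_add]; exact h₁
  · intro h U hU
    refine Submodule.span_induction ?_ ?_ ?_ ?_ hU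
    · rintro x ⟨s, hs, rfl⟩
      have hs' : s = Finset.univ := Finset.eq_univ_of_card s (by rw [hs, Fintype.card_fin])
      subst hs'
      have hωT : ω * ↑T = involute (↑T : CliffordAlgebra Q) * ω := topE_mul Q hQ hn _
      rcases h with he | ho
      · rw [involute_eq_of_mem_even he] at hωT
        have : (↑T : CliffordAlgebra Q) * ω * ↑T⁻¹ = ω := by
          rw [← hωT, mul_assoc, Units.mul_inv, mul_one]
        rw [show eProd Q Finset.univ = ω from rfl, this]
        exact topE_mem Q
      · rw [involute_eq_of_mem_odd ho] at hωT
        have : (↑T : CliffordAlgebra Q) * ω * ↑T⁻¹ = -ω := by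
          have h2 : (↑T : CliffordAlgebra Q) * ω = -(ω * ↑T) := by
            rw [hωT, neg_mul, neg_neg]
          rw [h2, neg_mul, mul_assoc, Units.mul_inv, mul_one]
        rw [show eProd Q Finset.univ = ω from rfl, this]
        exact (gradeSubmodule Q n).neg_mem (topE_mem Q)
    · simp
    · intro x y _ _ hx hy
      have : (↑T : CliffordAlgebra Q) * (x + y) * ↑T⁻¹ =
          ↑T * x * ↑T⁻¹ + ↑T * y * ↑T⁻¹ := by rw [mul_add, add_mul]
      rw [this]; exact (gradeSubmodule Q n).add_mem hx hy
    · intro c x _ hx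
      have : (↑T : CliffordAlgebra Q) * (c • x) * ↑T⁻¹ = c • (↑T * x * ↑T⁻¹) := by
        rw [mul_smul_comm, smul_mul_assoc]
      rw [this]; exact (gradeSubmodule Q n).smul_mem c hx
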